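/- arXiv:2312.16335 — 2 statements merged into one kernel-verified Lean document; each statement's English description precedes it below -/
import Mathlib

section
/- Suppose the queries q₁,…,q_m ∈ ℝ^D are normalized so that ‖q_j‖₂² = 1/m for all j (so that ‖Q‖_F² = 1, where Q stacks the queries as columns). Then the minimum over A, B ∈ St(D,d) of ‖Qᵀ Aᵀ B X − Qᵀ X‖_F² is at most the minimum over all (unconstrained) A, B ∈ ℝ^{d×D} of ‖Aᵀ B X − X‖_F². -/
open Matrix

def frobSq {m n : ℕ} (A : Matrix (Fin m) (Fin n) ℝ) : ℝ :=
  ∑ i, ∑ j, (A i j) ^ 2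

def Stiefel (D d : ℕ) : Set (Matrix (Fin d) (Fin D) ℝ) :=
  {U | U * Uᵀ = 1}

section Aux

open scoped RealInnerProductSpace
open Finset Module

private lemma frobSq_nonneg' {m n : ℕ} (A : Matrix (Fin m) (Fin n) ℝ) : 0 ≤ frobSq A :=
  Finset.sum_nonneg fun _ _ => Finset.sum_nonneg fun _ _ => sq_nonneg _

private lemma euclid_norm_sq' {D : ℕ} (x : EuclideanSpace ℝ (Fin D)) :
    ‖x‖ ^ 2 = ∑ i, x i ^ 2 := by
  rw [EuclideanSpace.norm_eq, Real.sq_sqrt (by positivity)]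
  simp [Real.norm_eq_abs, sq_abs]

private lemma parseval' {D : ℕ} (b : OrthonormalBasis (Fin D) ℝ (EuclideanSpace ℝ (Fin D)))
    (z : EuclideanSpace ℝ (Fin D)) : ‖z‖ ^ 2 = ∑ i, ⟪b i, z⟫ ^ 2 := by
  rw [← b.repr.norm_map z, euclid_norm_sq']
  exact Finset.sum_congr rfl fun i _ => by rw [b.repr_apply_apply]

private lemma key' {D d : ℕ} (hd : d ≤ D)
    (b : OrthonormalBasis (Fin D) ℝ (EuclideanSpace ℝ (Fin D)))
    (x y : EuclideanSpace ℝ (Fin D)) (hy : ∀ i : Fin D, d ≤ (i : ℕ) → ⟪b i, y⟫ = 0) :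
    ‖(∑ i : Fin d, ⟪b (Fin.castLE hd i), x⟫ • b (Fin.castLE hd i)) - x‖ ^ 2 ≤ ‖y - x‖ ^ 2 := by
  rw [parseval' b, parseval' b]
  refine Finset.sum_le_sum fun i _ => ?_
  have hP : ⟪b i, ∑ i' : Fin d, ⟪b (Fin.castLE hd i'), x⟫ • b (Fin.castLE hd i')⟫
      = if (i : ℕ) < d then ⟪b i, x⟫ else 0 := by
    rw [inner_sum]
    simp_rw [real_inner_smul_right]
    rcases lt_or_ge (i : ℕ) d with hi | hi
    · rw [Finset.sum_eq_single (⟨(i : ℕ), hi⟩ : Fin d), if_pos hi]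
      · have : Fin.castLE hd (⟨(i : ℕ), hi⟩ : Fin d) = i := rfl
        rw [this, orthonormal_iff_ite.mp b.orthonormal, if_pos rfl, mul_one]
      · intro j _ hj
        rw [orthonormal_iff_ite.mp b.orthonormal, if_neg, mul_zero]
        intro h
        apply hj
        apply Fin.ext
        simpa [Fin.ext_iff] using h.symm
      · simp
    · rw [if_neg (not_lt.mpr hi)]
      refine Finset.sum_eq_zero fun j _ => ?_
      rw [orthonormal_iff_ite.mp b.orthonormal, if_neg, mul_zero]
      intro h
      have : (i : ℕ) = (j : ℕ) := by simpa [Fin.ext_iff] using h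
      omega
  rw [inner_sub_right, inner_sub_right, hP]
  rcases lt_or_ge (i : ℕ) d with hi | hi
  · simp [hi, sq_nonneg]
  · rw [if_neg (not_lt.mpr hi), hy i hi]

private lemma exists_adapted' {D d : ℕ} (hd : d ≤ D) (A : Matrix (Fin d) (Fin D) ℝ) :
    ∃ b : OrthonormalBasis (Fin D) ℝ (EuclideanSpace ℝ (Fin D)),
      ∀ i : Fin D, d ≤ (i : ℕ) →
        ∀ y ∈ Submodule.span ℝ (Set.range fun i : Fin d => (WithLp.toLp 2 (A i) : EuclideanSpace ℝ (Fin D))),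
          ⟪b i, y⟫ = 0 := by
  classical
  set E := EuclideanSpace ℝ (Fin D)
  set rowA : Fin d → E := fun i => (WithLp.toLp 2 (A i) : E) with hrowA
  set S : Submodule ℝ E := Submodule.span ℝ (Set.range rowA) with hS
  have hrS : finrank ℝ S ≤ d := by
    have := finrank_range_le_card (R := ℝ) rowA
    simpa [Set.finrank] using this
  set r := finrank ℝ S with hr
  have hrd : r ≤ d := hrS
  let c := stdOrthonormalBasis ℝ S
  set v : Fin D → E := fun i => if h : (i : ℕ) < r then (c ⟨(i : ℕ), h⟩ : E) else 0 with hv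
  set s : Set (Fin D) := {i | (i : ℕ) < r} with hs
  have hvo : Orthonormal ℝ (s.restrict v) := by
    rw [orthonormal_iff_ite]
    rintro ⟨i, hi⟩ ⟨j, hj⟩
    have hi' : (i : ℕ) < r := hi
    have hj' : (j : ℕ) < r := hj
    simp only [Set.restrict_apply, Set.restrict, hv, dif_pos hi', dif_pos hj']
    rw [← Submodule.coe_inner, orthonormal_iff_ite.mp c.orthonormal]
    by_cases h : i = j
    · subst h; simp
    · rw [if_neg, if_neg]
      · simp [Subtype.ext_iff, h]
      · simp only [Fin.ext_iff]; exact fun hij => absurd (Fin.ext hij) h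
  obtain ⟨b, hb⟩ := hvo.exists_orthonormalBasis_extension_of_card_eq
    (by simp [E])
  refine ⟨b, fun i hi y hy => ?_⟩
  have hrep := c.sum_repr ⟨y, hy⟩
  have hyrep : y = ∑ j : Fin r, c.repr ⟨y, hy⟩ j • (c j : E) := by
    have := congrArg (Subtype.val) hrep
    simpa using this.symm
  rw [hyrep, inner_sum]
  refine Finset.sum_eq_zero fun j _ => ?_
  rw [real_inner_smul_right]
  have hjD : ((⟨(j : ℕ), lt_of_lt_of_le j.2 (hrd.trans hd)⟩ : Fin D) : ℕ) < r := j.2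
  have hc : (c j : E) = b ⟨(j : ℕ), lt_of_lt_of_le j.2 (hrd.trans hd)⟩ := by
    rw [hb _ hjD]
    simp only [hv, dif_pos hjD]
    rfl
  rw [hc, orthonormal_iff_ite.mp b.orthonormal, if_neg, mul_zero]
  intro h
  have : (i : ℕ) = (j : ℕ) := by simp only [Fin.ext_iff] at h; simpa using h
  omega

private lemma exists_good_U' {D d n : ℕ} (hd : d ≤ D) (A B : Matrix (Fin d) (Fin D) ℝ)
    (X : Matrix (Fin D) (Fin n) ℝ) :
    ∃ U ∈ Stiefel D d, frobSq (Uᵀ * U * X - X) ≤ frobSq (Aᵀ * B * X - X) := by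
  classical
  obtain ⟨b, hb⟩ := exists_adapted' hd A
  set U : Matrix (Fin d) (Fin D) ℝ := Matrix.of fun i j => b (Fin.castLE hd i) j with hU
  have hUrow : ∀ i : Fin d, ∀ j : Fin D, U i j = b (Fin.castLE hd i) j := fun _ _ => rfl
  have hSt : U ∈ Stiefel D d := by
    show U * Uᵀ = 1
    ext i j
    rw [mul_apply, Matrix.one_apply]
    have : ∑ k, U i k * Uᵀ k j = ⟪b (Fin.castLE hd i), b (Fin.castLE hd j)⟫ := by
      simp [PiLp.inner_apply, RCLike.inner_apply, hUrow, transpose_apply]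
      exact Finset.sum_congr rfl fun _ _ => mul_comm _ _
    rw [this, orthonormal_iff_ite.mp b.orthonormal]
    simp [Fin.castLE_inj]
  refine ⟨U, hSt, ?_⟩
  have hcol : ∀ k : Fin n,
      ∑ j, ((Uᵀ * U * X - X) j k) ^ 2 ≤ ∑ j, ((Aᵀ * B * X - X) j k) ^ 2 := by
    intro k
    set x : EuclideanSpace ℝ (Fin D) := WithLp.toLp 2 (fun j => X j k) with hx
    set y : EuclideanSpace ℝ (Fin D) := WithLp.toLp 2 (fun j => (Aᵀ * B * X) j k) with hy
    have hyS : y ∈ Submodule.span ℝ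
        (Set.range fun i : Fin d => (WithLp.toLp 2 (A i) : EuclideanSpace ℝ (Fin D))) := by
      have hyrep : y = ∑ i : Fin d, (B * X) i k • (WithLp.toLp 2 (A i) : EuclideanSpace ℝ (Fin D)) := by
        ext j
        rw [WithLp.ofLp_sum, Finset.sum_apply]
        show (Aᵀ * B * X) j k = _
        rw [Matrix.mul_assoc, mul_apply]
        refine Finset.sum_congr rfl fun i _ => ?_
        rw [transpose_apply, mul_comm]
        rfl
      rw [hyrep]
      exact Submodule.sum_mem _ fun i _ =>
        Submodule.smul_mem _ _ (Submodule.subset_span (Set.mem_range_self i))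
    have hkey := key' hd b x y (fun i hi => hb i hi y hyS)
    rw [euclid_norm_sq', euclid_norm_sq'] at hkey
    have hL : ∀ j : Fin D,
        ((∑ i : Fin d, ⟪b (Fin.castLE hd i), x⟫ • b (Fin.castLE hd i)) - x) j
          = (Uᵀ * U * X - X) j k := by
      intro j
      rw [PiLp.sub_apply, WithLp.ofLp_sum, Finset.sum_apply, Matrix.sub_apply]
      congr 1
      rw [Matrix.mul_assoc, mul_apply]
      refine Finset.sum_congr rfl fun i _ => ?_
      show ⟪b (Fin.castLE hd i), x⟫ * b (Fin.castLE hd i) j = Uᵀ j i * (U * X) i k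
      rw [transpose_apply, mul_apply, mul_comm]
      congr 1
      simp [PiLp.inner_apply, hx, hUrow, mul_comm]
    have hR : ∀ j : Fin D, (y - x) j = (Aᵀ * B * X - X) j k := by
      intro j
      rw [PiLp.sub_apply, Matrix.sub_apply, hy, hx]
    calc ∑ j, ((Uᵀ * U * X - X) j k) ^ 2
        = ∑ j, (((∑ i : Fin d, ⟪b (Fin.castLE hd i), x⟫ • b (Fin.castLE hd i)) - x) j) ^ 2 :=
          Finset.sum_congr rfl fun j _ => by rw [hL j]
      _ ≤ ∑ j, ((y - x) j) ^ 2 := hkey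
      _ = ∑ j, ((Aᵀ * B * X - X) j k) ^ 2 := Finset.sum_congr rfl fun j _ => by rw [hR j]
  unfold frobSq
  rw [Finset.sum_comm, Finset.sum_comm (γ := Fin D)]
  exact Finset.sum_le_sum fun k _ => hcol k

private lemma qbound' {D m n : ℕ} (Q : Matrix (Fin D) (Fin m) ℝ)
    (hQ : ∀ j, ∑ i, (Q i j) ^ 2 = 1 / (m : ℝ)) (Z : Matrix (Fin D) (Fin n) ℝ) :
    frobSq (Qᵀ * Z) ≤ frobSq Z := by
  have h1 : frobSq (Qᵀ * Z) ≤ ∑ _j : Fin m, ∑ k : Fin n, (1 / (m : ℝ)) * ∑ i, (Z i k) ^ 2 := by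
    refine Finset.sum_le_sum fun j _ => Finset.sum_le_sum fun k _ => ?_
    rw [mul_apply]
    calc (∑ i, Qᵀ j i * Z i k) ^ 2 = (∑ i, Q i j * Z i k) ^ 2 := by congr 1
      _ ≤ (∑ i, (Q i j) ^ 2) * ∑ i, (Z i k) ^ 2 :=
          Finset.sum_mul_sq_le_sq_mul_sq _ _ _
      _ = (1 / (m : ℝ)) * ∑ i, (Z i k) ^ 2 := by rw [hQ j]
  refine h1.trans ?_
  rw [Finset.sum_const, Finset.card_univ, Fintype.card_fin, ← Finset.mul_sum, nsmul_eq_mul]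
  have hfz : frobSq Z = ∑ k : Fin n, ∑ i, (Z i k) ^ 2 := Finset.sum_comm
  rw [← hfz]
  have hm : (m : ℝ) * (1 / (m : ℝ)) ≤ 1 := by
    rcases Nat.eq_zero_or_pos m with h | h
    · simp [h]
    · rw [mul_one_div, div_self (by positivity)]
  calc (m : ℝ) * ((1 / (m : ℝ)) * frobSq Z) = ((m : ℝ) * (1 / (m : ℝ))) * frobSq Z := by ring
    _ ≤ 1 * frobSq Z := mul_le_mul_of_nonneg_right hm (frobSq_nonneg' Z)
    _ = frobSq Z := one_mul _

private lemma stiefel_dim_le' {D d : ℕ} {U : Matrix (Fin d) (Fin D) ℝ}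
    (hU : U ∈ Stiefel D d) : d ≤ D := by
  set v : Fin d → EuclideanSpace ℝ (Fin D) := fun i => WithLp.toLp 2 (U i) with hv
  have hvo : Orthonormal ℝ v := by
    rw [orthonormal_iff_ite]
    intro i j
    have h1 : ⟪v i, v j⟫ = (U * Uᵀ) i j := by
      simp [hv, PiLp.inner_apply, RCLike.inner_apply, mul_apply, transpose_apply]
      exact Finset.sum_congr rfl fun _ _ => mul_comm _ _
    rw [h1, hU, Matrix.one_apply]
  have := hvo.linearIndependent.fintype_card_le_finrank
  simpa using this

end Aux

theorem stmt_3 (D m n d : ℕ)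
    (Q : Matrix (Fin D) (Fin m) ℝ) (X : Matrix (Fin D) (Fin n) ℝ)
    (hQ : ∀ j, ∑ i, (Q i j) ^ 2 = 1 / (m : ℝ)) :
    sInf {y : ℝ | ∃ A ∈ Stiefel D d, ∃ B ∈ Stiefel D d,
        y = frobSq (Qᵀ * Aᵀ * B * X - Qᵀ * X)} ≤
    sInf {y : ℝ | ∃ A B : Matrix (Fin d) (Fin D) ℝ,
        y = frobSq (Aᵀ * B * X - X)} := by
  classical
  set L : Set ℝ := {y : ℝ | ∃ A ∈ Stiefel D d, ∃ B ∈ Stiefel D d,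
      y = frobSq (Qᵀ * Aᵀ * B * X - Qᵀ * X)} with hL
  set R : Set ℝ := {y : ℝ | ∃ A B : Matrix (Fin d) (Fin D) ℝ,
      y = frobSq (Aᵀ * B * X - X)} with hR
  have hLb : BddBelow L := by
    refine ⟨0, fun y hy => ?_⟩
    obtain ⟨A, _, B, _, rfl⟩ := hy
    exact frobSq_nonneg' _
  by_cases hd : d ≤ D
  · have hRne : R.Nonempty :=
      ⟨frobSq ((0 : Matrix (Fin d) (Fin D) ℝ)ᵀ * 0 * X - X), 0, 0, rfl⟩
    refine le_csInf hRne ?_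
    rintro r ⟨A, B, rfl⟩
    obtain ⟨U, hU, hle⟩ := exists_good_U' hd A B X
    have hmem : frobSq (Qᵀ * Uᵀ * U * X - Qᵀ * X) ∈ L := ⟨U, hU, U, hU, rfl⟩
    refine (csInf_le hLb hmem).trans ?_
    have heq : Qᵀ * Uᵀ * U * X - Qᵀ * X = Qᵀ * (Uᵀ * U * X - X) := by
      rw [Matrix.mul_sub, ← Matrix.mul_assoc, ← Matrix.mul_assoc]
    rw [heq]
    exact (qbound' Q hQ _).trans hle
  · have hLe : L = ∅ := by
      ext y
      simp only [hL, Set.mem_setOf_eq, Set.mem_empty_iff_false, iff_false]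
      rintro ⟨A, hA, B, hB, rfl⟩
      exact hd (stiefel_dim_le' hA)
    rw [hLe, Real.sInf_empty]
    refine Real.sInf_nonneg fun y hy => ?_
    obtain ⟨A, B, rfl⟩ := hy
    exact frobSq_nonneg' _
end

section
/- Let f : D → ℝ be continuously differentiable on a compact convex set D ⊆ ℝ^N, with curvature constant C_f = sup over z, s ∈ D, γ ∈ (0,1], y = z + γ(s − z), of (2/γ²)(f(y) − f(z) − ⟨∇f(z), y − z⟩). If ∇f is L-Lipschitz continuous on D, then C_f ≤ L · diam(D)², where diam(D) is the diameter of D in the Euclidean norm. -/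
theorem stmt_12 (N : ℕ) (Dset : Set (EuclideanSpace ℝ (Fin N)))
    (hDc : IsCompact Dset) (hDconv : Convex ℝ Dset)
    (f : EuclideanSpace ℝ (Fin N) → ℝ)
    (f' : EuclideanSpace ℝ (Fin N) → (EuclideanSpace ℝ (Fin N) →L[ℝ] ℝ))
    (hdiff : ∀ z ∈ Dset, HasFDerivWithinAt f (f' z) Dset z)
    (hcont : ContinuousOn f' Dset)
    (L : ℝ) (hL : 0 ≤ L)
    (hLip : ∀ z ∈ Dset, ∀ y ∈ Dset, ‖f' z - f' y‖ ≤ L * ‖z - y‖) :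
    ∀ z ∈ Dset, ∀ s ∈ Dset, ∀ γ ∈ Set.Ioc (0 : ℝ) 1,
      (2 / γ ^ 2) * (f (z + γ • (s - z)) - f z - f' z (γ • (s - z))) ≤
        L * (Metric.diam Dset) ^ 2 := by
  intro z hz s hs γ hγ
  obtain ⟨hγ0, hγ1⟩ := hγ
  set v : EuclideanSpace ℝ (Fin N) := γ • (s - z) with hv
  -- the path
  set p : ℝ → EuclideanSpace ℝ (Fin N) := fun t => z + t • v with hp
  have hpmem : ∀ t ∈ Set.Icc (0:ℝ) 1, p t ∈ Dset := by
    intro t ht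
    have key : p t = z + (t * γ) • (s - z) := by
      simp [hp, hv, smul_smul]
    rw [key]
    exact hDconv.add_smul_sub_mem hz hs
      ⟨mul_nonneg ht.1 hγ0.le, mul_le_one₀ ht.2 hγ0.le hγ1⟩
  have hpderiv : ∀ t : ℝ, HasDerivAt p v t := by
    intro t
    simpa [hp] using ((hasDerivAt_id t).smul_const v).const_add z
  set g : ℝ → ℝ := fun t => f (p t) with hg
  have hgderiv : ∀ t ∈ Set.Icc (0:ℝ) 1,
      HasDerivWithinAt g (f' (p t) v) (Set.Icc 0 1) t := by
    intro t ht
    exact ((hdiff (p t) (hpmem t ht)).comp_hasDerivWithinAt t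
      ((hpderiv t).hasDerivWithinAt) hpmem)
  have hpcont : Continuous p := by
    continuity
  have hgdcont : ContinuousOn (fun t => f' (p t) v) (Set.Icc (0:ℝ) 1) := by
    exact ((hcont.comp hpcont.continuousOn hpmem).clm_apply continuousOn_const)
  have hint : IntervalIntegrable (fun t => f' (p t) v) MeasureTheory.volume 0 1 := by
    apply ContinuousOn.intervalIntegrable
    rwa [Set.uIcc_of_le zero_le_one]
  have hftc : ∫ t in (0:ℝ)..1, f' (p t) v = g 1 - g 0 := by
    apply intervalIntegral.integral_eq_sub_of_hasDeriv_right_of_le zero_le_one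
    · intro t ht
      exact (hgderiv t ht).continuousWithinAt
    · intro t ht
      have : HasDerivAt g (f' (p t) v) t :=
        (hgderiv t (Set.mem_Icc_of_Ioo ht)).hasDerivAt
          (Icc_mem_nhds ht.1 ht.2)
      exact this.hasDerivWithinAt
    · exact hint
  have hnormpt : ∀ t ∈ Set.Icc (0:ℝ) 1, ‖p t - z‖ = t * ‖v‖ := by
    intro t ht
    simp [hp, norm_smul, abs_of_nonneg ht.1]
  have hbound : ∀ t ∈ Set.Icc (0:ℝ) 1,
      f' (p t) v - f' z v ≤ L * ‖v‖ ^ 2 * t := by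
    intro t ht
    have h1 : f' (p t) v - f' z v = (f' (p t) - f' z) v := by simp
    calc f' (p t) v - f' z v = (f' (p t) - f' z) v := h1
      _ ≤ ‖(f' (p t) - f' z) v‖ := le_abs_self _
      _ ≤ ‖f' (p t) - f' z‖ * ‖v‖ := (f' (p t) - f' z).le_opNorm v
      _ ≤ (L * ‖p t - z‖) * ‖v‖ := by
          gcongr
          exact hLip _ (hpmem t ht) _ hz
      _ = L * ‖v‖ ^ 2 * t := by rw [hnormpt t ht]; ring
  have hkey : g 1 - g 0 - f' z v ≤ L * ‖v‖ ^ 2 / 2 := by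
    have h2 : f' z v = ∫ t in (0:ℝ)..1, f' z v := by simp
    have h3 : g 1 - g 0 - f' z v = ∫ t in (0:ℝ)..1, (f' (p t) v - f' z v) := by
      rw [intervalIntegral.integral_sub hint intervalIntegrable_const, hftc]
      simp
    rw [h3]
    have h4 : (∫ t in (0:ℝ)..1, (f' (p t) v - f' z v)) ≤
        ∫ t in (0:ℝ)..1, L * ‖v‖ ^ 2 * t := by
      apply intervalIntegral.integral_mono_on zero_le_one
        (hint.sub intervalIntegrable_const)
        ((continuous_const.mul continuous_id).intervalIntegrable 0 1)
      exact hbound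
    calc (∫ t in (0:ℝ)..1, (f' (p t) v - f' z v)) ≤ _ := h4
      _ = L * ‖v‖ ^ 2 / 2 := by
          rw [intervalIntegral.integral_const_mul]
          simp [integral_id]
          ring
  have hvnorm : ‖v‖ ≤ γ * Metric.diam Dset := by
    have : ‖v‖ = γ * ‖s - z‖ := by
      simp [hv, norm_smul, abs_of_nonneg hγ0.le]
    rw [this]
    gcongr
    rw [← dist_eq_norm]
    exact Metric.dist_le_diam_of_mem hDc.isBounded hs hz
  have hg1 : g 1 = f (z + γ • (s - z)) := by simp [hg, hp, hv]
  have hg0 : g 0 = f z := by simp [hg, hp]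
  have hfin : f (z + γ • (s - z)) - f z - f' z (γ • (s - z)) ≤
      L * (γ * Metric.diam Dset) ^ 2 / 2 := by
    calc f (z + γ • (s - z)) - f z - f' z (γ • (s - z))
        = g 1 - g 0 - f' z v := by rw [hg1, hg0]
      _ ≤ L * ‖v‖ ^ 2 / 2 := hkey
      _ ≤ L * (γ * Metric.diam Dset) ^ 2 / 2 := by
          gcongr
  have hγ2 : (0:ℝ) < γ ^ 2 := by positivity
  rw [div_mul_eq_mul_div, div_le_iff₀ hγ2]
  calc 2 * (f (z + γ • (s - z)) - f z - f' z (γ • (s - z)))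
      ≤ 2 * (L * (γ * Metric.diam Dset) ^ 2 / 2) := by linarith
    _ = L * Metric.diam Dset ^ 2 * γ ^ 2 := by ring
end
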